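/- Given real polynomials f and P, define sequences of real polynomials (Kₙ) and (Zₙ) by K₀ = f, Z₀ = 0, and for n ≥ 0: Zₙ₊₁ = Kₙ′ and Kₙ₊₁ = (1/2)·Zₙ·P′ + Zₙ′·P, where ′ denotes the polynomial derivative. Assume the degree of f is at most q, the degree of P is at most m, and m ≥ 2. Then for every natural number σ the degree of K₂σ is at most q + σ(m − 2), and the degree of Z₂σ₊₁ is at most q + σ(m − 2) − 1 (the bound for Z₂σ₊₁ being read in the natural numbers with truncated subtraction). -/

import Mathlib

open Polynomial

private lemma deriv_zero_of_natDegree_zero {A : Polynomial ℝ} (h : A.natDegree = 0) :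
    derivative A = 0 := by
  obtain ⟨a, rfl⟩ := Polynomial.natDegree_eq_zero.mp h
  simp

private lemma aux_step (A P : Polynomial ℝ) (d m : ℕ) (hA : A.natDegree ≤ d)
    (hP : P.natDegree ≤ m) (hm : 2 ≤ m) :
    (Polynomial.C (1 / 2 : ℝ) * derivative A * derivative P
      + derivative (derivative A) * P).natDegree ≤ d + (m - 2) := by
  rcases Nat.lt_or_ge A.natDegree 2 with hk | hk
  · rcases Nat.lt_or_ge A.natDegree 1 with hk0 | hk1
    · have h0 : derivative A = 0 := deriv_zero_of_natDegree_zero (Nat.lt_one_iff.mp hk0)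
      simp [h0]
    · -- natDegree A = 1
      have h1 : (derivative A).natDegree = 0 := by
        have := Polynomial.natDegree_derivative_le A
        omega
      have h2 : derivative (derivative A) = 0 := deriv_zero_of_natDegree_zero h1
      have hd : 1 ≤ d := le_trans hk1 hA
      calc (Polynomial.C (1 / 2 : ℝ) * derivative A * derivative P
          + derivative (derivative A) * P).natDegree
          = (Polynomial.C (1 / 2 : ℝ) * derivative A * derivative P).natDegree := by
            simp [h2]
        _ ≤ (Polynomial.C (1 / 2 : ℝ) * derivative A).natDegree + (derivative P).natDegree :=
            Polynomial.natDegree_mul_le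
        _ ≤ (Polynomial.C (1 / 2 : ℝ)).natDegree + (derivative A).natDegree
              + (derivative P).natDegree := by
            exact Nat.add_le_add_right Polynomial.natDegree_mul_le _
        _ ≤ 0 + 0 + (m - 1) := by
            have := Polynomial.natDegree_derivative_le P
            have : (derivative P).natDegree ≤ m - 1 := by omega
            simp [Polynomial.natDegree_C, h1, this]
            omega
        _ ≤ d + (m - 2) := by omega
  · have hA1 : (derivative A).natDegree ≤ d - 1 := by
      have := Polynomial.natDegree_derivative_le A
      omega
    have hA2 : (derivative (derivative A)).natDegree ≤ d - 2 := by
      have h1 := Polynomial.natDegree_derivative_le A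
      have h2 := Polynomial.natDegree_derivative_le (derivative A)
      omega
    have hP1 : (derivative P).natDegree ≤ m - 1 := by
      have := Polynomial.natDegree_derivative_le P
      omega
    have hd : 2 ≤ d := le_trans hk hA
    refine le_trans (Polynomial.natDegree_add_le _ _) (max_le ?_ ?_)
    · calc (Polynomial.C (1 / 2 : ℝ) * derivative A * derivative P).natDegree
          ≤ (Polynomial.C (1 / 2 : ℝ) * derivative A).natDegree + (derivative P).natDegree :=
            Polynomial.natDegree_mul_le
        _ ≤ (Polynomial.C (1 / 2 : ℝ)).natDegree + (derivative A).natDegree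
              + (derivative P).natDegree := Nat.add_le_add_right Polynomial.natDegree_mul_le _
        _ ≤ 0 + (d - 1) + (m - 1) := by
            simp [Polynomial.natDegree_C]
            omega
        _ ≤ d + (m - 2) := by omega
    · calc (derivative (derivative A) * P).natDegree
          ≤ (derivative (derivative A)).natDegree + P.natDegree :=
            Polynomial.natDegree_mul_le
        _ ≤ (d - 2) + m := by omega
        _ ≤ d + (m - 2) := by omega

theorem stmt5 (f P : Polynomial ℝ) (q m : ℕ) (K Z : ℕ → Polynomial ℝ)
    (hK0 : K 0 = f) (hZ0 : Z 0 = 0)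
    (hZ : ∀ n : ℕ, Z (n + 1) = Polynomial.derivative (K n))
    (hK : ∀ n : ℕ, K (n + 1) =
      Polynomial.C (1 / 2 : ℝ) * Z n * Polynomial.derivative P
        + Polynomial.derivative (Z n) * P)
    (hf : f.natDegree ≤ q) (hP : P.natDegree ≤ m) (hm : 2 ≤ m) :
    ∀ σ : ℕ, (K (2 * σ)).natDegree ≤ q + σ * (m - 2) ∧
      (Z (2 * σ + 1)).natDegree ≤ q + σ * (m - 2) - 1 := by
  have hKstep : ∀ σ : ℕ, (K (2 * σ)).natDegree ≤ q + σ * (m - 2) := by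
    intro σ
    induction σ with
    | zero => simpa [hK0] using hf
    | succ n ih =>
      have h2 : 2 * (n + 1) = (2 * n + 1) + 1 := by ring
      rw [h2, hK, hZ]
      have := aux_step (K (2 * n)) P (q + n * (m - 2)) m ih hP hm
      calc _ ≤ q + n * (m - 2) + (m - 2) := this
        _ = q + (n + 1) * (m - 2) := by ring
  intro σ
  refine ⟨hKstep σ, ?_⟩
  rw [hZ]
  have := Polynomial.natDegree_derivative_le (K (2 * σ))
  have := hKstep σ
  omega
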